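/- Let (X, μ) be a σ-finite measure space and ι a finite index type; for each i ∈ ι let (Y_i, ν_i) be a σ-finite measure space, H_i : Y_i → ℝ measurable, β_i > 0 with T_i = 1/β_i, Z_i = ∫ exp(−β_i·H_i) dν_i satisfying 0 < Z_i < ∞, and τ_i = Z_i⁻¹·exp(−β_i·H_i) the canonical density, with H_i·τ_i and τ_i·log τ_i integrable. Let ρ_A⁰ be a probability density on (X, μ) with ρ_A⁰·log ρ_A⁰ integrable, let the initial joint density on X × ∏_i Y_i (with the product measure) be ρ₀(x, y) = ρ_A⁰(x)·∏_i τ_i(y_i), let Φ be a measurable bijection of X × ∏_i Y_i with measurable inverse, both measure-preserving for the product measure, and let ρ₁ = ρ₀ ∘ Φ⁻¹, with the marginal ρ_A¹ on X and the marginal ρ_{B_i}¹ on each Y_i having integrable ρ·log ρ and with H_i·ρ_{B_i}¹ integrable. Define ⟨Q_i⟩ = ∫ H_i·τ_i dν_i − ∫ H_i·ρ_{B_i}¹ dν_i. Then ∑_{i∈ι} ⟨Q_i⟩/T_i ≤ S[ρ_A¹] − S[ρ_A⁰]. -/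

import Mathlib

open MeasureTheory Real
open scoped NNReal ENNReal

private lemma aux_gibbs (a b : ℝ) (ha : 0 ≤ a) (hb : 0 < b) :
    a * log b + a - b ≤ a * log a := by
  rcases eq_or_lt_of_le ha with rfl | ha'
  · simp [hb.le]
  · have h := Real.log_le_sub_one_of_pos (div_pos hb ha')
    rw [Real.log_div hb.ne' ha'.ne'] at h
    have h2 := mul_le_mul_of_nonneg_left h ha'.le
    have h3 : a * (b / a - 1) = b - a := by field_simp
    nlinarith

private lemma aux_pi_integrable {ι : Type*} [Fintype ι] {E : ι → Type*}
    [∀ i, MeasurableSpace (E i)] (ν : ∀ i, Measure (E i)) [∀ i, SigmaFinite (ν i)]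
    (f : ∀ i, E i → ℝ) (hf : ∀ i, Integrable (f i) (ν i)) :
    Integrable (fun y : ∀ i, E i => ∏ i, f i (y i)) (Measure.pi ν) := by
  letI : ∀ i, MeasureSpace (E i) := fun i => ⟨ν i⟩
  haveI : ∀ i, SigmaFinite (volume : Measure (E i)) := fun i => inferInstanceAs (SigmaFinite (ν i))
  exact Integrable.fintype_prod_dep hf

private lemma aux_pi_integral {ι : Type*} [Fintype ι] {E : ι → Type*}
    [∀ i, MeasurableSpace (E i)] (ν : ∀ i, Measure (E i)) [∀ i, SigmaFinite (ν i)]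
    (f : ∀ i, E i → ℝ) :
    ∫ y, ∏ i, f i (y i) ∂Measure.pi ν = ∏ i, ∫ z, f i z ∂ν i := by
  letI : ∀ i, MeasureSpace (E i) := fun i => ⟨ν i⟩
  haveI : ∀ i, SigmaFinite (volume : Measure (E i)) := fun i => inferInstanceAs (SigmaFinite (ν i))
  exact integral_fintype_prod_eq_prod f
private lemma aux_update_prod {ι : Type*} [Fintype ι] [DecidableEq ι] {E : ι → Type*}
    (f : ∀ i, E i → ℝ) (i : ι) (g : E i → ℝ) (y : ∀ j, E j) :
    (∏ j, Function.update f i (fun z => g z * f i z) j (y j)) = g (y i) * ∏ j, f j (y j) := by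
  rw [← Finset.mul_prod_erase Finset.univ _ (Finset.mem_univ i),
      ← Finset.mul_prod_erase Finset.univ (fun j => f j (y j)) (Finset.mem_univ i),
      Function.update_self]
  rw [Finset.prod_congr rfl (fun j hj =>
    show Function.update f i (fun z => g z * f i z) j (y j) = f j (y j) by
      rw [Function.update_of_ne (Finset.ne_of_mem_erase hj)])]
  ring

private lemma aux_pi_coord_integrable {ι : Type*} [Fintype ι] {E : ι → Type*}
    [∀ i, MeasurableSpace (E i)] (ν : ∀ i, Measure (E i)) [∀ i, SigmaFinite (ν i)]
    (f : ∀ i, E i → ℝ) (hf : ∀ i, Integrable (f i) (ν i)) (i : ι) (g : E i → ℝ)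
    (hg : Integrable (fun z => g z * f i z) (ν i)) :
    Integrable (fun y : ∀ j, E j => g (y i) * ∏ j, f j (y j)) (Measure.pi ν) := by
  classical
  have h := aux_pi_integrable ν (Function.update f i (fun z => g z * f i z)) (fun j => by
    rcases eq_or_ne j i with rfl | hj
    · simpa using hg
    · simpa [Function.update_of_ne hj] using hf j)
  have heq : (fun y : ∀ j, E j => g (y i) * ∏ j, f j (y j))
      = fun y => ∏ j, Function.update f i (fun z => g z * f i z) j (y j) :=
    funext fun y => (aux_update_prod f i g y).symm
  rw [heq]; exact h

private lemma aux_pi_coord_integral {ι : Type*} [Fintype ι] {E : ι → Type*}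
    [∀ i, MeasurableSpace (E i)] (ν : ∀ i, Measure (E i)) [∀ i, SigmaFinite (ν i)]
    (f : ∀ i, E i → ℝ) (hf1 : ∀ j, ∫ z, f j z ∂ν j = 1) (i : ι) (g : E i → ℝ) :
    ∫ y, g (y i) * ∏ j, f j (y j) ∂Measure.pi ν = ∫ z, g z * f i z ∂ν i := by
  classical
  have heq : (fun y : ∀ j, E j => g (y i) * ∏ j, f j (y j))
      = fun y => ∏ j, Function.update f i (fun z => g z * f i z) j (y j) :=
    funext fun y => (aux_update_prod f i g y).symm
  rw [heq, aux_pi_integral]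
  rw [← Finset.mul_prod_erase Finset.univ _ (Finset.mem_univ i)]
  rw [Finset.prod_congr rfl (fun j hj =>
    show ∫ z, Function.update f i (fun z => g z * f i z) j z ∂ν j = 1 by
      rw [Function.update_of_ne (Finset.ne_of_mem_erase hj)]; exact hf1 j)]
  simp

private lemma aux_transfer {W : Type*} {Yi : Type*} [MeasurableSpace W] [MeasurableSpace Yi]
    (m : Measure W) (νi : Measure Yi)
    (ρ : W → ℝ) (hρm : Measurable ρ) (hρ0 : ∀ w, 0 ≤ ρ w) (hρi : Integrable ρ m)
    (c : W → Yi) (hc : Measurable c)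
    (ρB : Yi → ℝ) (hρBm : Measurable ρB) (hρB0 : 0 ≤ᵐ[νi] ρB) (hρBi : Integrable ρB νi)
    (hmarg : ∀ s : Set Yi, MeasurableSet s → ∫ y in s, ρB y ∂νi = ∫ w in c ⁻¹' s, ρ w ∂m)
    (h : Yi → ℝ) (hhm : Measurable h) (hhi : Integrable (fun y => h y * ρB y) νi) :
    Integrable (fun w => h (c w) * ρ w) m ∧
      ∫ w, h (c w) * ρ w ∂m = ∫ y, h y * ρB y ∂νi := by
  set mρ := m.withDensity (fun w => ENNReal.ofReal (ρ w)) with hmρ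
  set νρ := νi.withDensity (fun y => ENNReal.ofReal (ρB y)) with hνρ
  have hmap : Measure.map c mρ = νρ := by
    ext s hs
    rw [Measure.map_apply hc hs, hmρ, withDensity_apply _ (hc hs), hνρ, withDensity_apply _ hs,
      ← ofReal_integral_eq_lintegral_ofReal hρi.integrableOn
        (ae_restrict_of_ae (Filter.Eventually.of_forall hρ0)),
      ← ofReal_integral_eq_lintegral_ofReal hρBi.integrableOn (ae_restrict_of_ae hρB0),
      hmarg s hs]
  have hfin : ∀ᵐ y ∂νi, (ENNReal.ofReal (ρB y)) < ⊤ :=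
    Filter.Eventually.of_forall fun _ => ENNReal.ofReal_lt_top
  have h1 : Integrable h νρ := by
    rw [hνρ, integrable_withDensity_iff hρBm.ennreal_ofReal hfin]
    exact hhi.congr (hρB0.mono fun y hy => by simp [ENNReal.toReal_ofReal hy])
  have h2 : Integrable (fun w => h (c w)) mρ := by
    rw [← hmap] at h1
    exact (integrable_map_measure hhm.stronglyMeasurable.aestronglyMeasurable
      hc.aemeasurable).mp h1
  have h3 : Integrable (fun w => h (c w) * ρ w) m := by
    rw [hmρ, integrable_withDensity_iff hρm.ennreal_ofReal
      (Filter.Eventually.of_forall fun _ => ENNReal.ofReal_lt_top)] at h2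
    exact h2.congr (Filter.Eventually.of_forall fun w => by
      simp [ENNReal.toReal_ofReal (hρ0 w)])
  refine ⟨h3, ?_⟩
  have e1 : ∫ w, h (c w) * ρ w ∂m = ∫ w, h (c w) ∂mρ := by
    rw [hmρ, show (fun w => ENNReal.ofReal (ρ w)) = fun w => ((Real.toNNReal (ρ w) : ℝ≥0) : ℝ≥0∞)
      from rfl, integral_withDensity_eq_integral_smul hρm.real_toNNReal (fun w => h (c w))]
    refine integral_congr_ae (Filter.Eventually.of_forall fun w => ?_)
    simp [NNReal.smul_def, Real.coe_toNNReal _ (hρ0 w), mul_comm]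
  have e2 : ∫ w, h (c w) ∂mρ = ∫ y, h y ∂νρ := by
    rw [← hmap, integral_map hc.aemeasurable hhm.stronglyMeasurable.aestronglyMeasurable]
  have e3 : ∫ y, h y ∂νρ = ∫ y, h y * ρB y ∂νi := by
    rw [hνρ]
    rw [show (fun y => ENNReal.ofReal (ρB y)) = fun y => ((Real.toNNReal (ρB y) : ℝ≥0) : ℝ≥0∞)
      from rfl]
    rw [integral_withDensity_eq_integral_smul hρBm.real_toNNReal h]
    refine integral_congr_ae (hρB0.mono fun y hy => ?_)
    simp [NNReal.smul_def, Real.coe_toNNReal _ hy, mul_comm]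
  rw [e1, e2, e3]

private lemma aux_density_nonneg {Yi : Type*} [MeasurableSpace Yi] (νi : Measure Yi)
    [SigmaFinite νi] (ρB : Yi → ℝ) (hm : Measurable ρB)
    (h0 : ∀ s : Set Yi, MeasurableSet s → 0 ≤ ∫ y in s, ρB y ∂νi) :
    0 ≤ᵐ[νi] ρB := by
  have hset : ∀ n : ℕ, νi (spanningSets νi n ∩ {y | ρB y ≤ -(1 / (n + 1))} ∩
      {y | -(n + 1 : ℝ) ≤ ρB y}) = 0 := by
    intro n
    set s := spanningSets νi n ∩ {y | ρB y ≤ -(1 / (n + 1))} ∩ {y | -(n + 1 : ℝ) ≤ ρB y} with hs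
    have hsm : MeasurableSet s :=
      ((measurableSet_spanningSets νi n).inter (hm measurableSet_Iic)).inter
        (hm measurableSet_Ici)
    have hfin : νi s < ⊤ :=
      lt_of_le_of_lt (measure_mono (by intro y hy; exact hy.1.1)) (measure_spanningSets_lt_top νi n)
    have hint : IntegrableOn ρB s νi := by
      refine Measure.integrableOn_of_bounded (M := n + 1) hfin.ne hm.aestronglyMeasurable ?_
      refine (ae_restrict_iff' hsm).2 (Filter.Eventually.of_forall fun y hy => ?_)
      rw [Real.norm_eq_abs, abs_le]
      constructor
      · exact hy.2
      · have := hy.1.2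
        simp only [Set.mem_setOf_eq] at this
        have hpos : (0:ℝ) < 1 / (n + 1) := by positivity
        linarith
    have hle : ∫ y in s, ρB y ∂νi ≤ -(1 / (n + 1)) * (νi s).toReal := by
      have := setIntegral_mono_on hint (integrableOn_const hfin.ne) hsm
        (fun y hy => hy.1.2)
      simpa [mul_comm, measureReal_def] using this
    have h0' := h0 s hsm
    by_contra hne
    have hpos : 0 < (νi s).toReal := ENNReal.toReal_pos hne hfin.ne
    have : -(1 / (n + 1 : ℝ)) * (νi s).toReal < 0 := by
      apply mul_neg_of_neg_of_pos _ hpos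
      have : (0:ℝ) < 1 / (n + 1) := by positivity
      linarith
    linarith
  have hcov : {y | ρB y < 0} ⊆ ⋃ n : ℕ, spanningSets νi n ∩ {y | ρB y ≤ -(1 / (n + 1))} ∩
      {y | -(n + 1 : ℝ) ≤ ρB y} := by
    intro y hy
    simp only [Set.mem_setOf_eq] at hy
    obtain ⟨n₀, hn₀⟩ := Set.mem_iUnion.1 (by
      rw [iUnion_spanningSets νi]; exact Set.mem_univ y : y ∈ ⋃ n, spanningSets νi n)
    obtain ⟨n₁, hn₁⟩ := exists_nat_gt (max (1 / (-ρB y)) (-ρB y))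
    refine Set.mem_iUnion.2 ⟨max n₀ n₁, ⟨⟨monotone_spanningSets νi (le_max_left n₀ n₁) hn₀, ?_⟩, ?_⟩⟩
    · have h1 : 1 / (-ρB y) < n₁ := lt_of_le_of_lt (le_max_left _ _) hn₁
      have hpos : (0:ℝ) < -ρB y := by linarith
      have hn : (n₁ : ℝ) ≤ (max n₀ n₁ : ℕ) + 1 := by
        have h := Nat.le_max_right n₀ n₁
        have h' : (n₁ : ℝ) ≤ (max n₀ n₁ : ℕ) := by exact_mod_cast h
        linarith
      have h2 : 1 / (-ρB y) < (max n₀ n₁ : ℕ) + 1 := lt_of_lt_of_le h1 hn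
      have h3 : 1 / ((max n₀ n₁ : ℕ) + 1 : ℝ) < -ρB y := by
        rw [div_lt_iff₀ hpos] at h2
        rw [div_lt_iff₀ (by positivity)]
        linarith [mul_comm (-ρB y) ((max n₀ n₁ : ℕ) + 1 : ℝ)]
      simp only [Set.mem_setOf_eq]
      linarith
    · have h1 : -ρB y < n₁ := lt_of_le_of_lt (le_max_right _ _) hn₁
      have hn : (n₁ : ℝ) ≤ (max n₀ n₁ : ℕ) + 1 := by
        have h := Nat.le_max_right n₀ n₁
        have h' : (n₁ : ℝ) ≤ (max n₀ n₁ : ℕ) := by exact_mod_cast h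
        linarith
      simp only [Set.mem_setOf_eq]
      linarith
  have : νi {y | ρB y < 0} = 0 :=
    measure_mono_null hcov (measure_iUnion_null fun n => hset n)
  filter_upwards [measure_eq_zero_iff_ae_notMem.1 this] with y hy
  simpa using not_lt.1 (by simpa using hy)

private lemma aux_density_integrable {Yi : Type*} [MeasurableSpace Yi] (νi : Measure Yi)
    [SigmaFinite νi] (ρB : Yi → ℝ) (hm : Measurable ρB) (hnn : 0 ≤ᵐ[νi] ρB)
    (h1 : ∀ s : Set Yi, MeasurableSet s → ∫ y in s, ρB y ∂νi ≤ 1) :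
    Integrable ρB νi := by
  set S : ℕ → Set Yi := fun n => spanningSets νi n ∩ {y | ρB y ≤ n} ∩ {y | 0 ≤ ρB y} with hS
  have hSm : ∀ n, MeasurableSet (S n) :=
    fun n => ((measurableSet_spanningSets νi n).inter (hm measurableSet_Iic)).inter
      (hm measurableSet_Ici)
  have hSmono : Monotone S := by
    intro a b hab y hy
    refine ⟨⟨monotone_spanningSets νi hab hy.1.1, ?_⟩, hy.2⟩
    have := hy.1.2; simp only [Set.mem_setOf_eq] at this ⊢
    exact le_trans this (by exact_mod_cast Nat.cast_le.2 hab)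
  set f : ℕ → Yi → ℝ≥0∞ := fun n => (S n).indicator (fun y => ENNReal.ofReal (ρB y)) with hf
  have hfm : ∀ n, Measurable (f n) := fun n => (hm.ennreal_ofReal).indicator (hSm n)
  have hfmono : Monotone f := by
    intro a b hab y
    by_cases hy : y ∈ S a
    · rw [hf]; simp only [Set.indicator_of_mem hy, Set.indicator_of_mem (hSmono hab hy)]
      exact le_refl _
    · simp [hf, Set.indicator_of_notMem hy]
  have hsup : ∀ y, (⨆ n, f n y) = ENNReal.ofReal (ρB y) := by
    intro y
    rcases le_or_gt 0 (ρB y) with hy0 | hy0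
    · obtain ⟨n₀, hn₀⟩ := Set.mem_iUnion.1 (by
        rw [iUnion_spanningSets νi]; exact Set.mem_univ y : y ∈ ⋃ n, spanningSets νi n)
      obtain ⟨n₁, hn₁⟩ := exists_nat_gt (ρB y)
      have hmem : y ∈ S (max n₀ n₁) := by
        refine ⟨⟨monotone_spanningSets νi (le_max_left n₀ n₁) hn₀, ?_⟩, hy0⟩
        simp only [Set.mem_setOf_eq]
        have : (n₁ : ℝ) ≤ (max n₀ n₁ : ℕ) := by exact_mod_cast Nat.le_max_right n₀ n₁
        linarith
      apply le_antisymm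
      · refine iSup_le fun n => ?_
        by_cases h : y ∈ S n
        · rw [hf]; simp [Set.indicator_of_mem h]
        · simp [hf, Set.indicator_of_notMem h]
      · refine le_trans ?_ (le_iSup _ (max n₀ n₁))
        rw [hf]; simp [Set.indicator_of_mem hmem]
    · have : ∀ n, y ∉ S n := fun n hn => absurd hn.2 (by simp [Set.mem_setOf_eq]; linarith)
      simp [hf, Set.indicator_of_notMem (this _), ENNReal.ofReal_of_nonpos hy0.le]
  have key : ∫⁻ y, ENNReal.ofReal (ρB y) ∂νi ≤ 1 := by
    have e0 : ∫⁻ y, ENNReal.ofReal (ρB y) ∂νi = ⨆ n, ∫⁻ y, f n y ∂νi := by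
      rw [← lintegral_iSup hfm hfmono]
      exact lintegral_congr fun y => (hsup y).symm
    rw [e0]
    refine iSup_le fun n => ?_
    have hfin : νi (S n) < ⊤ :=
      lt_of_le_of_lt (measure_mono (fun y hy => hy.1.1)) (measure_spanningSets_lt_top νi n)
    have hint : IntegrableOn ρB (S n) νi := by
      refine Measure.integrableOn_of_bounded (M := n) hfin.ne hm.aestronglyMeasurable ?_
      refine (ae_restrict_iff' (hSm n)).2 (Filter.Eventually.of_forall fun y hy => ?_)
      rw [Real.norm_eq_abs, abs_le]
      exact ⟨by have := hy.2; simp only [Set.mem_setOf_eq] at this; linarith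
          [Nat.cast_nonneg (α := ℝ) n], hy.1.2⟩
    have e1 : ∫⁻ y, f n y ∂νi = ∫⁻ y in S n, ENNReal.ofReal (ρB y) ∂νi := by
      rw [hf, lintegral_indicator (hSm n)]
    have e2 : ∫⁻ y in S n, ENNReal.ofReal (ρB y) ∂νi = ENNReal.ofReal (∫ y in S n, ρB y ∂νi) := by
      rw [ofReal_integral_eq_lintegral_ofReal hint
        ((ae_restrict_iff' (hSm n)).2 (Filter.Eventually.of_forall fun y hy => hy.2))]
    rw [e1, e2]
    calc ENNReal.ofReal (∫ y in S n, ρB y ∂νi) ≤ ENNReal.ofReal 1 :=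
          ENNReal.ofReal_le_ofReal (h1 (S n) (hSm n))
      _ = 1 := ENNReal.ofReal_one
  refine ⟨hm.aestronglyMeasurable, ?_⟩
  rw [hasFiniteIntegral_iff_norm]
  have : ∫⁻ y, ENNReal.ofReal ‖ρB y‖ ∂νi = ∫⁻ y, ENNReal.ofReal (ρB y) ∂νi := by
    refine lintegral_congr_ae (hnn.mono fun y hy => ?_)
    simp only [Real.norm_eq_abs]
    rw [abs_of_nonneg (by simpa using hy)]
  rw [this]
  exact lt_of_le_of_lt key ENNReal.one_lt_top

/-- Fundamental Theorem of Statistical Thermo-dynamics (classical case,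
several heat reservoirs): `∑ i, ⟨Q_i⟩/T_i ≤ S[ρ_A¹] - S[ρ_A⁰]`. -/
theorem fundamental_theorem_statistical_thermodynamics
    {X : Type*} [MeasurableSpace X] (μ : Measure X) [SigmaFinite μ]
    {ι : Type*} [Fintype ι] {Y : ι → Type*} [∀ i, MeasurableSpace (Y i)]
    (ν : ∀ i, Measure (Y i)) [∀ i, SigmaFinite (ν i)]
    (H : ∀ i, Y i → ℝ) (hH : ∀ i, Measurable (H i))
    (β : ι → ℝ) (hβ : ∀ i, 0 < β i) (T : ι → ℝ) (hT : ∀ i, T i = 1 / β i)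
    (hZint : ∀ i, Integrable (fun y => exp (-β i * H i y)) (ν i))
    (Z : ι → ℝ) (hZdef : ∀ i, Z i = ∫ y, exp (-β i * H i y) ∂(ν i))
    (hZpos : ∀ i, 0 < Z i)
    (τ : ∀ i, Y i → ℝ) (hτdef : ∀ i, ∀ y, τ i y = (Z i)⁻¹ * exp (-β i * H i y))
    (hHτ : ∀ i, Integrable (fun y => H i y * τ i y) (ν i))
    (hentτ : ∀ i, Integrable (fun y => τ i y * log (τ i y)) (ν i))
    (ρA0 : X → ℝ) (hρA0m : Measurable ρA0) (hρA00 : ∀ x, 0 ≤ ρA0 x)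
    (hρA01 : ∫ x, ρA0 x ∂μ = 1)
    (hentA0 : Integrable (fun x => ρA0 x * log (ρA0 x)) μ)
    (ρ0 : X × (∀ i, Y i) → ℝ)
    (hρ0def : ∀ p : X × (∀ i, Y i), ρ0 p = ρA0 p.1 * ∏ i, τ i (p.2 i))
    (Φ : X × (∀ i, Y i) ≃ᵐ X × (∀ i, Y i))
    (hΦ : MeasurePreserving Φ (μ.prod (Measure.pi ν)) (μ.prod (Measure.pi ν)))
    (hΦinv : MeasurePreserving Φ.symm (μ.prod (Measure.pi ν)) (μ.prod (Measure.pi ν)))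
    (ρ1 : X × (∀ i, Y i) → ℝ) (hρ1def : ρ1 = ρ0 ∘ Φ.symm)
    (ρA1 : X → ℝ) (hρA1 : ∀ x, ρA1 x = ∫ y, ρ1 (x, y) ∂(Measure.pi ν))
    (ρB1 : ∀ i, Y i → ℝ) (hρB1m : ∀ i, Measurable (ρB1 i))
    (hρB1 : ∀ i, ∀ s : Set (Y i), MeasurableSet s →
      ∫ y in s, ρB1 i y ∂(ν i) =
        ∫ p in {p : X × (∀ j, Y j) | p.2 i ∈ s}, ρ1 p ∂(μ.prod (Measure.pi ν)))
    (hentA1 : Integrable (fun x => ρA1 x * log (ρA1 x)) μ)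
    (hentB1 : ∀ i, Integrable (fun y => ρB1 i y * log (ρB1 i y)) (ν i))
    (hHρB1 : ∀ i, Integrable (fun y => H i y * ρB1 i y) (ν i))
    (Q : ι → ℝ)
    (hQdef : ∀ i, Q i = (∫ y, H i y * τ i y ∂(ν i)) - ∫ y, H i y * ρB1 i y ∂(ν i)) :
    ∑ i, Q i / T i ≤
      -(∫ x, ρA1 x * log (ρA1 x) ∂μ) - -(∫ x, ρA0 x * log (ρA0 x) ∂μ) := by
  classical
  -- basic facts about τ
  have τeq : ∀ i, τ i = fun y => (Z i)⁻¹ * exp (-β i * H i y) := fun i => funext (hτdef i)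
  have τmeas : ∀ i, Measurable (τ i) := fun i => by
    rw [τeq i]; exact measurable_const.mul ((hH i).const_mul (-β i)).exp
  have τpos : ∀ i y, 0 < τ i y := fun i y => by
    rw [hτdef i y]
    have := hZpos i
    positivity
  have τint : ∀ i, Integrable (τ i) (ν i) := fun i => by
    rw [τeq i]; exact (hZint i).const_mul _
  have τint1 : ∀ i, ∫ y, τ i y ∂ν i = 1 := fun i => by
    rw [τeq i, integral_const_mul, ← hZdef i, inv_mul_cancel₀ (hZpos i).ne']
  have logτ : ∀ i y, log (τ i y) = -(log (Z i)) - β i * H i y := fun i y => by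
    rw [hτdef i y, Real.log_mul (inv_ne_zero (hZpos i).ne') (Real.exp_ne_zero _),
      Real.log_inv, Real.log_exp]
    ring
  have ρA0int : Integrable ρA0 μ := by
    by_contra h
    rw [integral_undef h] at hρA01
    exact one_ne_zero hρA01.symm
  -- the product of the τ's
  have τprodmeas : Measurable (fun y : ∀ i, Y i => ∏ i, τ i (y i)) :=
    Finset.measurable_prod _ fun i _ => (τmeas i).comp (measurable_pi_apply i)
  have τprodint : Integrable (fun y : ∀ i, Y i => ∏ i, τ i (y i)) (Measure.pi ν) :=
    aux_pi_integrable ν τ τint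
  have τprodpos : ∀ y : ∀ i, Y i, 0 < ∏ i, τ i (y i) := fun y =>
    Finset.prod_pos fun i _ => τpos i _
  have τprod1 : ∫ y, ∏ i, τ i (y i) ∂Measure.pi ν = 1 := by
    rw [aux_pi_integral]
    exact Finset.prod_eq_one fun i _ => τint1 i
  -- ρ0
  have ρ0eq : ρ0 = fun p => ρA0 p.1 * ∏ i, τ i (p.2 i) := funext hρ0def
  have ρ0meas : Measurable ρ0 := by
    rw [ρ0eq]
    exact (hρA0m.comp measurable_fst).mul (τprodmeas.comp measurable_snd)
  have ρ0nonneg : ∀ p, 0 ≤ ρ0 p := fun p => by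
    rw [hρ0def p]; exact mul_nonneg (hρA00 _) (τprodpos _).le
  have ρ0int : Integrable ρ0 (μ.prod (Measure.pi ν)) := by
    rw [ρ0eq]; exact ρA0int.mul_prod τprodint
  have ρ0tot : ∫ p, ρ0 p ∂(μ.prod (Measure.pi ν)) = 1 := by
    have h := integral_prod_mul (μ := μ) (ν := Measure.pi ν) ρA0 (fun y => ∏ i, τ i (y i))
    rw [hρA01, τprod1, one_mul] at h
    rw [ρ0eq]
    exact h
  -- ρ1
  have ρ1meas : Measurable ρ1 := by rw [hρ1def]; exact ρ0meas.comp Φ.symm.measurable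
  have ρ1nonneg : ∀ p, 0 ≤ ρ1 p := fun p => by rw [hρ1def]; exact ρ0nonneg _
  have ρ1int : Integrable ρ1 (μ.prod (Measure.pi ν)) := by
    rw [hρ1def]
    exact (hΦinv.integrable_comp_emb Φ.symm.measurableEmbedding).2 ρ0int
  have ρ1tot : ∫ p, ρ1 p ∂(μ.prod (Measure.pi ν)) = 1 := by
    rw [hρ1def]
    rw [show ∫ p, (ρ0 ∘ Φ.symm) p ∂(μ.prod (Measure.pi ν))
        = ∫ p, ρ0 (Φ.symm p) ∂(μ.prod (Measure.pi ν)) from rfl]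
    rw [hΦinv.integral_comp' ρ0]
    exact ρ0tot
  -- ρA1
  have ρA1eq : ρA1 = fun x => ∫ y, ρ1 (x, y) ∂Measure.pi ν := funext hρA1
  have ρA1meas : Measurable ρA1 := by
    rw [ρA1eq]
    exact (ρ1meas.stronglyMeasurable.integral_prod_right').measurable
  have ρA1nonneg : ∀ x, 0 ≤ ρA1 x := fun x => by
    rw [hρA1 x]; exact integral_nonneg fun y => ρ1nonneg _
  have ρA1int : Integrable ρA1 μ := by
    rw [ρA1eq]; exact ρ1int.integral_prod_left
  have ρA1tot : ∫ x, ρA1 x ∂μ = 1 := by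
    rw [ρA1eq, ← integral_prod ρ1 ρ1int]
    exact ρ1tot
  -- marginal identity for the first factor
  have hmargA : ∀ s : Set X, MeasurableSet s →
      ∫ x in s, ρA1 x ∂μ = ∫ p in Prod.fst ⁻¹' s, ρ1 p ∂(μ.prod (Measure.pi ν)) := by
    intro s hs
    have hset : (Prod.fst ⁻¹' s : Set (X × ∀ i, Y i)) = s ×ˢ (Set.univ : Set (∀ i, Y i)) := by
      ext p; simp
    have hmeq : (μ.restrict s).prod (Measure.pi ν)
        = (μ.prod (Measure.pi ν)).restrict (s ×ˢ (Set.univ : Set (∀ i, Y i))) := by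
      calc (μ.restrict s).prod (Measure.pi ν)
          = (μ.restrict s).prod ((Measure.pi ν).restrict Set.univ) := by
            rw [Measure.restrict_univ]
        _ = (μ.prod (Measure.pi ν)).restrict (s ×ˢ Set.univ) := Measure.prod_restrict _ _
    have hres : Integrable ρ1 ((μ.restrict s).prod (Measure.pi ν)) := by
      rw [hmeq]; exact ρ1int.integrableOn
    rw [hset]
    show ∫ x in s, ρA1 x ∂μ = ∫ p, ρ1 p ∂((μ.prod (Measure.pi ν)).restrict (s ×ˢ Set.univ))
    rw [← hmeq, integral_prod ρ1 hres]
    exact setIntegral_congr_fun hs fun x _ => (hρA1 x)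
  -- facts about the ρB1's
  have coordmeas : ∀ i, Measurable (fun p : X × ∀ j, Y j => p.2 i) :=
    fun i => (measurable_pi_apply i).comp measurable_snd
  have hmargB : ∀ i, ∀ s : Set (Y i), MeasurableSet s →
      ∫ y in s, ρB1 i y ∂ν i
        = ∫ p in (fun p : X × ∀ j, Y j => p.2 i) ⁻¹' s, ρ1 p ∂(μ.prod (Measure.pi ν)) :=
    fun i s hs => hρB1 i s hs
  have ρB1nonneg : ∀ i, 0 ≤ᵐ[ν i] ρB1 i := fun i => by
    refine aux_density_nonneg (ν i) (ρB1 i) (hρB1m i) fun s hs => ?_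
    rw [hmargB i s hs]
    exact setIntegral_nonneg ((coordmeas i) hs) fun p _ => ρ1nonneg p
  have ρB1int : ∀ i, Integrable (ρB1 i) (ν i) := fun i => by
    refine aux_density_integrable (ν i) (ρB1 i) (hρB1m i) (ρB1nonneg i) fun s hs => ?_
    rw [hmargB i s hs]
    calc ∫ p in (fun p : X × ∀ j, Y j => p.2 i) ⁻¹' s, ρ1 p ∂(μ.prod (Measure.pi ν))
        ≤ ∫ p, ρ1 p ∂(μ.prod (Measure.pi ν)) :=
          setIntegral_le_integral ρ1int (Filter.Eventually.of_forall ρ1nonneg)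
      _ = 1 := ρ1tot
  -- transfer of integrals through the marginals
  have transH : ∀ i, Integrable (fun p : X × ∀ j, Y j => H i (p.2 i) * ρ1 p)
        (μ.prod (Measure.pi ν)) ∧
      ∫ p, H i (p.2 i) * ρ1 p ∂(μ.prod (Measure.pi ν)) = ∫ y, H i y * ρB1 i y ∂ν i :=
    fun i => aux_transfer (μ.prod (Measure.pi ν)) (ν i) ρ1 ρ1meas ρ1nonneg ρ1int
      _ (coordmeas i) (ρB1 i) (hρB1m i) (ρB1nonneg i) (ρB1int i) (hmargB i) (H i) (hH i)
      (hHρB1 i)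
  have hentA1' : Integrable (fun x => log (ρA1 x) * ρA1 x) μ := by
    have : (fun x => log (ρA1 x) * ρA1 x) = fun x => ρA1 x * log (ρA1 x) := by
      funext x; ring
    rw [this]; exact hentA1
  have transA : Integrable (fun p : X × ∀ j, Y j => log (ρA1 p.1) * ρ1 p)
        (μ.prod (Measure.pi ν)) ∧
      ∫ p, log (ρA1 p.1) * ρ1 p ∂(μ.prod (Measure.pi ν)) = ∫ x, log (ρA1 x) * ρA1 x ∂μ :=
    aux_transfer (μ.prod (Measure.pi ν)) μ ρ1 ρ1meas ρ1nonneg ρ1int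
      Prod.fst measurable_fst ρA1 ρA1meas (Filter.Eventually.of_forall ρA1nonneg) ρA1int
      hmargA (fun x => log (ρA1 x)) (Real.measurable_log.comp ρA1meas) hentA1'
  -- pointwise decomposition of the entropy of ρ0
  have ρ0ent_eq : (fun p : X × ∀ j, Y j => ρ0 p * log (ρ0 p))
      = fun p => (ρA0 p.1 * log (ρA0 p.1)) * (∏ i, τ i (p.2 i))
          + ∑ i, (-(log (Z i)) - β i * H i (p.2 i)) * ρ0 p := by
    funext p
    rcases eq_or_lt_of_le (hρA00 p.1) with h0 | hpos
    · have hz : ρ0 p = 0 := by rw [hρ0def p, ← h0, zero_mul]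
      rw [hz, ← h0]
      simp
    · have hP := τprodpos p.2
      have hlog : log (ρ0 p) = log (ρA0 p.1) + ∑ i, (-(log (Z i)) - β i * H i (p.2 i)) := by
        rw [hρ0def p, Real.log_mul hpos.ne' hP.ne',
          Real.log_prod (fun i _ => (τpos i _).ne'),
          Finset.sum_congr rfl fun i _ => logτ i _]
      rw [hlog, mul_add, Finset.mul_sum]
      have h1 : ρ0 p * log (ρA0 p.1) = (ρA0 p.1 * log (ρA0 p.1)) * ∏ i, τ i (p.2 i) := by
        rw [hρ0def p]; ring
      rw [h1]
      congr 1
      exact Finset.sum_congr rfl fun i _ => mul_comm _ _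
  -- integrability of the summands
  have intsummand0 : ∀ i, Integrable
      (fun z : Y i => (-(log (Z i)) - β i * H i z) * τ i z) (ν i) := fun i => by
    have h := ((τint i).const_mul (-(log (Z i)))).sub ((hHτ i).const_mul (β i))
    exact h.congr (Filter.Eventually.of_forall fun z => by
      simp only [Pi.sub_apply]; ring)
  have intsummand : ∀ i, Integrable
      (fun p : X × ∀ j, Y j => (-(log (Z i)) - β i * H i (p.2 i)) * ρ0 p)
      (μ.prod (Measure.pi ν)) := fun i => by
    have h := ρA0int.mul_prod (aux_pi_coord_integrable ν τ τint i
      (fun z => -(log (Z i)) - β i * H i z) (intsummand0 i))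
    refine h.congr (Filter.Eventually.of_forall fun p => ?_)
    simp only [hρ0def]; ring
  have intfirst : Integrable
      (fun p : X × ∀ j, Y j => (ρA0 p.1 * log (ρA0 p.1)) * ∏ i, τ i (p.2 i))
      (μ.prod (Measure.pi ν)) := hentA0.mul_prod τprodint
  have ρ0entint : Integrable (fun p : X × ∀ j, Y j => ρ0 p * log (ρ0 p))
      (μ.prod (Measure.pi ν)) := by
    rw [ρ0ent_eq]
    exact intfirst.add (integrable_finset_sum _ fun i _ => intsummand i)
  -- value of the entropy of ρ0
  have valfirst : ∫ p, (ρA0 p.1 * log (ρA0 p.1)) * ∏ i, τ i (p.2 i) ∂(μ.prod (Measure.pi ν))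
      = ∫ x, ρA0 x * log (ρA0 x) ∂μ := by
    have h := integral_prod_mul (μ := μ) (ν := Measure.pi ν)
      (fun x => ρA0 x * log (ρA0 x)) (fun y => ∏ i, τ i (y i))
    rw [τprod1, mul_one] at h
    exact h
  have valsummand : ∀ i, ∫ p, (-(log (Z i)) - β i * H i (p.2 i)) * ρ0 p
        ∂(μ.prod (Measure.pi ν))
      = -(log (Z i)) - β i * ∫ y, H i y * τ i y ∂ν i := fun i => by
    have hre : (fun p : X × ∀ j, Y j => (-(log (Z i)) - β i * H i (p.2 i)) * ρ0 p)
        = fun p : X × ∀ j, Y j => ρA0 p.1 *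
            ((fun y : ∀ j, Y j => (-(log (Z i)) - β i * H i (y i)) * ∏ j, τ j (y j)) p.2) := by
      funext p; rw [hρ0def p]; ring
    rw [hre]
    have h := integral_prod_mul (μ := μ) (ν := Measure.pi ν) ρA0
      (fun y : ∀ j, Y j => (-(log (Z i)) - β i * H i (y i)) * ∏ j, τ j (y j))
    rw [h, hρA01, one_mul]
    rw [aux_pi_coord_integral ν τ τint1 i (fun z => -(log (Z i)) - β i * H i z)]
    have hsplit : (fun z : Y i => (-(log (Z i)) - β i * H i z) * τ i z)
        = fun z => -(log (Z i)) * τ i z - β i * (H i z * τ i z) := by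
      funext z; ring
    rw [hsplit, integral_sub ((τint i).const_mul _) ((hHτ i).const_mul _),
      integral_const_mul, integral_const_mul, τint1 i]
    ring
  have ρ0entval : ∫ p, ρ0 p * log (ρ0 p) ∂(μ.prod (Measure.pi ν))
      = ∫ x, ρA0 x * log (ρA0 x) ∂μ
        + ∑ i, (-(log (Z i)) - β i * ∫ y, H i y * τ i y ∂ν i) := by
    rw [ρ0ent_eq, integral_add intfirst (integrable_finset_sum _ fun i _ => intsummand i),
      integral_finset_sum _ (fun i _ => intsummand i), valfirst]
    congr 1
    exact Finset.sum_congr rfl fun i _ => valsummand i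
  -- transport to ρ1
  have ρ1entint : Integrable (fun p : X × ∀ j, Y j => ρ1 p * log (ρ1 p))
      (μ.prod (Measure.pi ν)) := by
    rw [hρ1def]
    exact (hΦinv.integrable_comp_emb Φ.symm.measurableEmbedding).2 ρ0entint
  have ρ1entval : ∫ p, ρ1 p * log (ρ1 p) ∂(μ.prod (Measure.pi ν))
      = ∫ x, ρA0 x * log (ρA0 x) ∂μ
        + ∑ i, (-(log (Z i)) - β i * ∫ y, H i y * τ i y ∂ν i) := by
    rw [hρ1def]
    rw [show ∫ p, (ρ0 ∘ Φ.symm) p * log ((ρ0 ∘ Φ.symm) p) ∂(μ.prod (Measure.pi ν))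
        = ∫ p, (fun q => ρ0 q * log (ρ0 q)) (Φ.symm p) ∂(μ.prod (Measure.pi ν)) from rfl]
    rw [hΦinv.integral_comp' (fun q => ρ0 q * log (ρ0 q))]
    exact ρ0entval
  -- a.e. vanishing of ρ1 where the marginal vanishes
  have hvanish : ∀ᵐ p ∂(μ.prod (Measure.pi ν)), ρA1 p.1 = 0 → ρ1 p = 0 := by
    set s : Set X := {x | ρA1 x = 0} with hsdef
    have hsm : MeasurableSet s := ρA1meas (measurableSet_singleton 0)
    have h0 : ∫ p in Prod.fst ⁻¹' s, ρ1 p ∂(μ.prod (Measure.pi ν)) = 0 := by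
      rw [← hmargA s hsm]
      rw [setIntegral_congr_fun hsm (fun x hx => (hx : ρA1 x = 0))]
      simp
    have hae : ρ1 =ᵐ[(μ.prod (Measure.pi ν)).restrict (Prod.fst ⁻¹' s)] 0 :=
      (integral_eq_zero_iff_of_nonneg_ae
        (ae_restrict_of_ae (Filter.Eventually.of_forall ρ1nonneg))
        ρ1int.integrableOn).1 h0
    have := (ae_restrict_iff' (measurable_fst hsm)).1 hae
    filter_upwards [this] with p hp hzero
    exact hp hzero
  -- the comparison density σ
  have σint : Integrable (fun p : X × ∀ j, Y j => ρA1 p.1 * ∏ i, τ i (p.2 i))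
      (μ.prod (Measure.pi ν)) := ρA1int.mul_prod τprodint
  have σtot : ∫ p, ρA1 p.1 * ∏ i, τ i (p.2 i) ∂(μ.prod (Measure.pi ν)) = 1 := by
    have h := integral_prod_mul (μ := μ) (ν := Measure.pi ν) ρA1 (fun y => ∏ i, τ i (y i))
    rw [ρA1tot, τprod1, one_mul] at h
    exact h
  -- integrability of the per-reservoir terms against ρ1
  have intCi : ∀ i, Integrable
      (fun p : X × ∀ j, Y j => (-(log (Z i)) - β i * H i (p.2 i)) * ρ1 p)
      (μ.prod (Measure.pi ν)) := fun i => by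
    have h := (ρ1int.const_mul (-(log (Z i)))).sub ((transH i).1.const_mul (β i))
    exact h.congr (Filter.Eventually.of_forall fun p => by
      simp only [Pi.sub_apply]; ring)
  have valCi : ∀ i, ∫ p, (-(log (Z i)) - β i * H i (p.2 i)) * ρ1 p ∂(μ.prod (Measure.pi ν))
      = -(log (Z i)) - β i * ∫ y, H i y * ρB1 i y ∂ν i := fun i => by
    have hre : (fun p : X × ∀ j, Y j => (-(log (Z i)) - β i * H i (p.2 i)) * ρ1 p)
        = fun p => -(log (Z i)) * ρ1 p - β i * (H i (p.2 i) * ρ1 p) := by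
      funext p; ring
    rw [hre, integral_sub (ρ1int.const_mul _) ((transH i).1.const_mul _),
      integral_const_mul, integral_const_mul, ρ1tot, (transH i).2]
    ring
  -- the Gibbs integrand
  set G : (X × ∀ j, Y j) → ℝ := fun p => ρ1 p * log (ρ1 p)
      - (log (ρA1 p.1) * ρ1 p + ∑ i, (-(log (Z i)) - β i * H i (p.2 i)) * ρ1 p
          + ρ1 p - ρA1 p.1 * ∏ i, τ i (p.2 i)) with hGdef
  have hGnn : 0 ≤ᵐ[μ.prod (Measure.pi ν)] G := by
    filter_upwards [hvanish] with p hp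
    rcases eq_or_lt_of_le (ρA1nonneg p.1) with h0 | hpos
    · have hz : ρ1 p = 0 := hp h0.symm
      simp only [hGdef, hz, ← h0]
      simp
    · have hb : 0 < ρA1 p.1 * ∏ i, τ i (p.2 i) := mul_pos hpos (τprodpos p.2)
      have hlogb : log (ρA1 p.1 * ∏ i, τ i (p.2 i))
          = log (ρA1 p.1) + ∑ i, (-(log (Z i)) - β i * H i (p.2 i)) := by
        rw [Real.log_mul hpos.ne' (τprodpos p.2).ne',
          Real.log_prod (fun i _ => (τpos i _).ne'),
          Finset.sum_congr rfl fun i _ => logτ i _]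
      have key := aux_gibbs (ρ1 p) (ρA1 p.1 * ∏ i, τ i (p.2 i)) (ρ1nonneg p) hb
      rw [hlogb] at key
      have hexp : ρ1 p * (log (ρA1 p.1) + ∑ i, (-(log (Z i)) - β i * H i (p.2 i)))
          = log (ρA1 p.1) * ρ1 p + ∑ i, (-(log (Z i)) - β i * H i (p.2 i)) * ρ1 p := by
        rw [mul_add, Finset.mul_sum]
        congr 1
        · ring
        · exact Finset.sum_congr rfl fun i _ => mul_comm _ _
      rw [hexp] at key
      simp only [hGdef, Pi.zero_apply]
      linarith
  have intS : Integrable (fun p : X × ∀ j, Y j =>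
      ∑ i, (-(log (Z i)) - β i * H i (p.2 i)) * ρ1 p) (μ.prod (Measure.pi ν)) :=
    integrable_finset_sum _ fun i _ => intCi i
  have int1 : Integrable (fun p : X × ∀ j, Y j =>
      log (ρA1 p.1) * ρ1 p + ∑ i, (-(log (Z i)) - β i * H i (p.2 i)) * ρ1 p)
      (μ.prod (Measure.pi ν)) := transA.1.add intS
  have int2 : Integrable (fun p : X × ∀ j, Y j =>
      log (ρA1 p.1) * ρ1 p + ∑ i, (-(log (Z i)) - β i * H i (p.2 i)) * ρ1 p + ρ1 p)
      (μ.prod (Measure.pi ν)) := int1.add ρ1int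
  have intComb : Integrable (fun p : X × ∀ j, Y j =>
      log (ρA1 p.1) * ρ1 p + ∑ i, (-(log (Z i)) - β i * H i (p.2 i)) * ρ1 p
        + ρ1 p - ρA1 p.1 * ∏ i, τ i (p.2 i)) (μ.prod (Measure.pi ν)) := int2.sub σint
  have hGint : Integrable G (μ.prod (Measure.pi ν)) := ρ1entint.sub intComb
  have hGval : ∫ p, G p ∂(μ.prod (Measure.pi ν))
      = (∫ x, ρA0 x * log (ρA0 x) ∂μ
          + ∑ i, (-(log (Z i)) - β i * ∫ y, H i y * τ i y ∂ν i))
        - ((∫ x, log (ρA1 x) * ρA1 x ∂μ)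
          + ∑ i, (-(log (Z i)) - β i * ∫ y, H i y * ρB1 i y ∂ν i) + 1 - 1) := by
    rw [hGdef]
    rw [integral_sub ρ1entint intComb, ρ1entval]
    congr 1
    rw [integral_sub int2 σint, integral_add int1 ρ1int, integral_add transA.1 intS,
      transA.2, ρ1tot, σtot, integral_finset_sum _ (fun i _ => intCi i)]
    congr 1
    congr 1
    congr 1
    exact Finset.sum_congr rfl fun i _ => valCi i
  have hGpos : 0 ≤ ∫ p, G p ∂(μ.prod (Measure.pi ν)) := integral_nonneg_of_ae hGnn
  rw [hGval] at hGpos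
  -- final arithmetic
  have hElog : ∫ x, log (ρA1 x) * ρA1 x ∂μ = ∫ x, ρA1 x * log (ρA1 x) ∂μ := by
    congr 1; funext x; ring
  rw [hElog] at hGpos
  have hsum : ∑ i, Q i / T i
      = ∑ i, (β i * ∫ y, H i y * τ i y ∂ν i - β i * ∫ y, H i y * ρB1 i y ∂ν i) := by
    refine Finset.sum_congr rfl fun i _ => ?_
    rw [hQdef i, hT i]
    have hb := hβ i
    field_simp
  have hsum2 : ∑ i, (-(log (Z i)) - β i * ∫ y, H i y * τ i y ∂ν i)
      - ∑ i, (-(log (Z i)) - β i * ∫ y, H i y * ρB1 i y ∂ν i)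
      = -∑ i, (β i * ∫ y, H i y * τ i y ∂ν i - β i * ∫ y, H i y * ρB1 i y ∂ν i) := by
    rw [← Finset.sum_sub_distrib, ← Finset.sum_neg_distrib]
    exact Finset.sum_congr rfl fun i _ => by ring
  rw [hsum]
  linarith [hGpos, hsum2]
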